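/- arXiv:2304.00223 — 2 statements merged into one kernel-verified Lean document; each statement's English description precedes it below -/
import Mathlib

section
/- Let ρ > 0, let H ∈ ℂ^{N×M} be any matrix, fix j ∈ {1,…,M}, let H_j ∈ ℂ^{N×(M−1)} be H with its j-th column removed, and set Q = (ρ I_N + H H^H)^{-1} and Q_j = (ρ I_N + H_j H_j^H)^{-1}. Then for every matrix Ψ ∈ ℂ^{N×N}, |Tr(Ψ (Q − Q_j))| ≤ ‖Ψ‖/ρ, where ‖·‖ denotes the spectral norm. -/
noncomputable section

open MeasureTheory ProbabilityTheory Matrix Filter Finset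
open scoped ENNReal NNReal Matrix BoundedContinuousFunction Topology ComplexOrder

namespace HoloMIMO

variable {Ω : Type*} [MeasurableSpace Ω]

/-- Spectral (ℓ²→ℓ²) operator norm of a complex rectangular matrix. -/
def specNorm {m n : ℕ} (A : Matrix (Fin m) (Fin n) ℂ) : ℝ :=
  ‖LinearMap.toContinuousLinearMap (Matrix.toEuclideanLin A)‖

/-- Squared Euclidean norm of a complex vector. -/
def vecNormSq {n : ℕ} (a : Fin n → ℂ) : ℝ := ∑ i, Complex.normSq (a i)

/-- The sesquilinear form `aᴴ B b`. -/
def bilin {n : ℕ} (B : Matrix (Fin n) (Fin n) ℂ) (a b : Fin n → ℂ) : ℂ :=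
  dotProduct (star a) (B.mulVec b)

/-- The quadratic form `aᴴ B a`. -/
def quad {n : ℕ} (B : Matrix (Fin n) (Fin n) ℂ) (a : Fin n → ℂ) : ℂ := bilin B a a

/-- The `k`-th column of a matrix, as a vector. -/
def colv {m : ℕ} {n : Type*} (A : Matrix (Fin m) n ℂ) (k : n) : Fin m → ℂ := fun i => A i k

/-- Entrywise square root of a real matrix, viewed as a complex matrix. -/
def entrySqrt {m n : ℕ} (S : Matrix (Fin m) (Fin n) ℝ) : Matrix (Fin m) (Fin n) ℂ :=
  Matrix.of fun i j => (Real.sqrt (S i j) : ℂ)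

/-- The channel `H = A + Σ^{∘1/2} ⊙ X`. -/
def chan {N M : ℕ} (A : Matrix (Fin N) (Fin M) ℂ) (S : Matrix (Fin N) (Fin M) ℝ)
    (X : Matrix (Fin N) (Fin M) ℂ) : Matrix (Fin N) (Fin M) ℂ :=
  A + Matrix.hadamard (entrySqrt S) X

/-- `D_j` : the N×N diagonal matrix with the `j`-th column of `Σ` on the diagonal. -/
def Dcol {N M : ℕ} (S : Matrix (Fin N) (Fin M) ℝ) (j : Fin M) : Matrix (Fin N) (Fin N) ℂ :=
  Matrix.diagonal fun i => (S i j : ℂ)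

/-- `D̃_i` : the M×M diagonal matrix with the `i`-th row of `Σ` on the diagonal. -/
def Drow {N M : ℕ} (S : Matrix (Fin N) (Fin M) ℝ) (i : Fin N) : Matrix (Fin M) (Fin M) ℂ :=
  Matrix.diagonal fun j => (S i j : ℂ)

/-- The resolvent `Q = (ρ I_N + H Hᴴ)⁻¹`. -/
def Qmat {N : ℕ} {m : Type*} [Fintype m] (ρ : ℝ) (H : Matrix (Fin N) m ℂ) :
    Matrix (Fin N) (Fin N) ℂ :=
  ((ρ : ℂ) • (1 : Matrix (Fin N) (Fin N) ℂ) + H * Hᴴ)⁻¹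

/-- The co-resolvent `Q̃ = (ρ I_M + Hᴴ H)⁻¹`. -/
def Qtmat {N M : ℕ} (ρ : ℝ) (H : Matrix (Fin N) (Fin M) ℂ) : Matrix (Fin M) (Fin M) ℂ :=
  ((ρ : ℂ) • (1 : Matrix (Fin M) (Fin M) ℂ) + Hᴴ * H)⁻¹

/-- `H` with its `j`-th column deleted (columns indexed by the remaining column indices). -/
def delCol {N M : ℕ} (H : Matrix (Fin N) (Fin M) ℂ) (j : Fin M) :
    Matrix (Fin N) {k : Fin M // k ≠ j} ℂ :=
  Matrix.of fun i k => H i k.1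

/-- The rank-one-perturbed resolvent `Q_j = (ρ I_N + H_j H_jᴴ)⁻¹`. -/
def Qjmat {N M : ℕ} (ρ : ℝ) (H : Matrix (Fin N) (Fin M) ℂ) (j : Fin M) :
    Matrix (Fin N) (Fin N) ℂ :=
  Qmat ρ (delCol H j)

/-- Mutual information `C(ρ) = log det(I + ρ⁻¹ H Hᴴ)`. -/
def MI {N M : ℕ} (ρ : ℝ) (H : Matrix (Fin N) (Fin M) ℂ) : ℝ :=
  Real.log ‖(1 + (ρ : ℂ)⁻¹ • (H * Hᴴ)).det‖

/-- `ψ = diag((ρ(1+δ̃_i))⁻¹)`. -/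
def psiMat {N : ℕ} (ρ : ℝ) (δt : Fin N → ℝ) : Matrix (Fin N) (Fin N) ℂ :=
  Matrix.diagonal fun i => (((ρ * (1 + δt i))⁻¹ : ℝ) : ℂ)

/-- `ψ̃ = diag((ρ(1+δ_j))⁻¹)`. -/
def psitMat {M : ℕ} (ρ : ℝ) (δ : Fin M → ℝ) : Matrix (Fin M) (Fin M) ℂ :=
  Matrix.diagonal fun j => (((ρ * (1 + δ j))⁻¹ : ℝ) : ℂ)

/-- `T = (ψ⁻¹ + ρ A ψ̃ Aᴴ)⁻¹`. -/
def Tmat {N M : ℕ} (ρ : ℝ) (A : Matrix (Fin N) (Fin M) ℂ) (δ : Fin M → ℝ) (δt : Fin N → ℝ) :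
    Matrix (Fin N) (Fin N) ℂ :=
  ((psiMat ρ δt)⁻¹ + (ρ : ℂ) • (A * psitMat ρ δ * Aᴴ))⁻¹

/-- `T̃ = (ψ̃⁻¹ + ρ Aᴴ ψ A)⁻¹`. -/
def Ttmat {N M : ℕ} (ρ : ℝ) (A : Matrix (Fin N) (Fin M) ℂ) (δ : Fin M → ℝ) (δt : Fin N → ℝ) :
    Matrix (Fin M) (Fin M) ℂ :=
  ((psitMat ρ δ)⁻¹ + (ρ : ℂ) • (Aᴴ * psiMat ρ δt * A))⁻¹

/-- `(δ, δ̃)` is a (the) nonnegative solution of the canonical system of `M + N` equations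
`δ_j = (1/M) Tr(D_j T)`, `δ̃_i = (1/M) Tr(D̃_i T̃)`. -/
def DESolution {N M : ℕ} (ρ : ℝ) (A : Matrix (Fin N) (Fin M) ℂ) (S : Matrix (Fin N) (Fin M) ℝ)
    (δ : Fin M → ℝ) (δt : Fin N → ℝ) : Prop :=
  (∀ j, 0 ≤ δ j) ∧ (∀ i, 0 ≤ δt i) ∧
  (∀ j, (δ j : ℂ) = (M : ℂ)⁻¹ * (Dcol S j * Tmat ρ A δ δt).trace) ∧
  (∀ i, (δt i : ℂ) = (M : ℂ)⁻¹ * (Drow S i * Ttmat ρ A δ δt).trace)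

/-- `t̃_{jj}`, the `j`-th diagonal entry of `T̃` (a real number). -/
def ttdiag {N M : ℕ} (ρ : ℝ) (A : Matrix (Fin N) (Fin M) ℂ) (δ : Fin M → ℝ) (δt : Fin N → ℝ)
    (j : Fin M) : ℝ := (Ttmat ρ A δ δt j j).re

/-- `Π_{jk} = a_kᴴ T D_j T a_k / (M (1+δ_k)²)`. -/
def PiMat {N M : ℕ} (ρ : ℝ) (A : Matrix (Fin N) (Fin M) ℂ) (S : Matrix (Fin N) (Fin M) ℝ)
    (δ : Fin M → ℝ) (δt : Fin N → ℝ) : Matrix (Fin M) (Fin M) ℝ :=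
  Matrix.of fun j k =>
    (bilin (Tmat ρ A δ δt * Dcol S j * Tmat ρ A δ δt) (colv A k) (colv A k)).re /
      (M * (1 + δ k) ^ 2)

/-- `Ξ_{jk} = (a_kᴴ T a_j)(a_jᴴ T a_k)/((1+δ_j)²(1+δ_k)²)` for `j ≠ k`, and `Ξ_{jj} = 0`. -/
def XiMat {N M : ℕ} (ρ : ℝ) (A : Matrix (Fin N) (Fin M) ℂ) (δ : Fin M → ℝ) (δt : Fin N → ℝ) :
    Matrix (Fin M) (Fin M) ℝ :=
  Matrix.of fun j k =>
    if j = k then 0 else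
      ((bilin (Tmat ρ A δ δt) (colv A k) (colv A j)) *
        (bilin (Tmat ρ A δ δt) (colv A j) (colv A k))).re /
        ((1 + δ j) ^ 2 * (1 + δ k) ^ 2)

/-- `Γ_{jk} = Tr(D_j T D_k T)/M²`. -/
def GammaMat {N M : ℕ} (ρ : ℝ) (A : Matrix (Fin N) (Fin M) ℂ) (S : Matrix (Fin N) (Fin M) ℝ)
    (δ : Fin M → ℝ) (δt : Fin N → ℝ) : Matrix (Fin M) (Fin M) ℝ :=
  Matrix.of fun j k =>
    ((Dcol S j * Tmat ρ A δ δt * Dcol S k * Tmat ρ A δ δt).trace).re / (M : ℝ) ^ 2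

/-- `Λ̃ = ρ² diag(t̃_{11}², …, t̃_{MM}²)`. -/
def LambdaMat {N M : ℕ} (ρ : ℝ) (A : Matrix (Fin N) (Fin M) ℂ) (δ : Fin M → ℝ)
    (δt : Fin N → ℝ) : Matrix (Fin M) (Fin M) ℝ :=
  Matrix.diagonal fun j => ρ ^ 2 * (ttdiag ρ A δ δt j) ^ 2

/-- The 2M×2M block matrix `B_M = [[Π, Γ], [Ξ + Λ̃, Πᵀ]]`. -/
def BMat {N M : ℕ} (ρ : ℝ) (A : Matrix (Fin N) (Fin M) ℂ) (S : Matrix (Fin N) (Fin M) ℝ)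
    (δ : Fin M → ℝ) (δt : Fin N → ℝ) : Matrix (Fin M ⊕ Fin M) (Fin M ⊕ Fin M) ℝ :=
  Matrix.fromBlocks (PiMat ρ A S δ δt) (GammaMat ρ A S δ δt)
    (XiMat ρ A δ δt + LambdaMat ρ A δ δt) (PiMat ρ A S δ δt)ᵀ

/-- `V_M(ρ) = − log det(I_{2M} − B_M)`. -/
def VM {N M : ℕ} (ρ : ℝ) (A : Matrix (Fin N) (Fin M) ℂ) (S : Matrix (Fin N) (Fin M) ℝ)
    (δ : Fin M → ℝ) (δt : Fin N → ℝ) : ℝ :=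
  - Real.log ((1 - BMat ρ A S δ δt).det)

/-- The entries of `X` are independent circularly-symmetric complex Gaussians: real and
imaginary parts of all entries are jointly independent, each centered Gaussian with
variance `v`. -/
def IIDcgauss {N M : ℕ} (μ : Measure Ω) (X : Ω → Matrix (Fin N) (Fin M) ℂ) (v : ℝ≥0) : Prop :=
  (∀ i j, Measure.map (fun ω => (X ω i j).re) μ = gaussianReal 0 v ∧
      Measure.map (fun ω => (X ω i j).im) μ = gaussianReal 0 v) ∧
  iIndepFun
    (fun (p : (Fin N × Fin M) × Bool) ω =>
      if p.2 then (X ω p.1.1 p.1.2).re else (X ω p.1.1 p.1.2).im) μ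

/-- The entries of the vector `x` are independent circularly-symmetric complex Gaussians,
the real and imaginary part of each entry being centered Gaussian of variance `v`. -/
def IIDcgaussVec {N : ℕ} (μ : Measure Ω) (x : Ω → Fin N → ℂ) (v : ℝ≥0) : Prop :=
  (∀ i, Measure.map (fun ω => (x ω i).re) μ = gaussianReal 0 v ∧
      Measure.map (fun ω => (x ω i).im) μ = gaussianReal 0 v) ∧
  iIndepFun
    (fun (p : Fin N × Bool) ω => if p.2 then (x ω p.1).re else (x ω p.1).im) μ

/-- `F_j` : the σ-field generated by the columns of `X` of index `≥ j`. -/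
def colSigma {N M : ℕ} (X : Ω → Matrix (Fin N) (Fin M) ℂ) (j : ℕ) : MeasurableSpace Ω :=
  MeasurableSpace.comap
    (fun ω => fun p : {k : Fin M // j ≤ (k : ℕ)} × Fin N => X ω p.2 p.1.1) inferInstance

/-- The random variable `ζ_j`. -/
def zeta {N M : ℕ} (ρ : ℝ) (A : Matrix (Fin N) (Fin M) ℂ) (S : Matrix (Fin N) (Fin M) ℝ)
    (H : Matrix (Fin N) (Fin M) ℂ) (j : Fin M) : ℝ :=
  ((quad (Qjmat ρ H j) (colv H j)).re - (M : ℝ)⁻¹ * ((Dcol S j * Qjmat ρ H j).trace).re -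
      (quad (Qjmat ρ H j) (colv A j)).re) /
    (1 + (M : ℝ)⁻¹ * ((Dcol S j * Qjmat ρ H j).trace).re + (quad (Qjmat ρ H j) (colv A j)).re)

/-- The random variable `e_j = h_jᴴ Q_j h_j − a_jᴴ Q_j a_j − (1/M) Tr(D_j Q_j)`. -/
def eQ {N M : ℕ} (ρ : ℝ) (A : Matrix (Fin N) (Fin M) ℂ) (S : Matrix (Fin N) (Fin M) ℝ)
    (H : Matrix (Fin N) (Fin M) ℂ) (j : Fin M) : ℝ :=
  (quad (Qjmat ρ H j) (colv H j)).re - (quad (Qjmat ρ H j) (colv A j)).re -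
    (M : ℝ)⁻¹ * ((Dcol S j * Qjmat ρ H j).trace).re

/-- Entrywise conditional expectation of a random matrix. -/
def condexpMat {N : ℕ} (μ : Measure Ω) (m : MeasurableSpace Ω)
    (F : Ω → Matrix (Fin N) (Fin N) ℂ) : Ω → Matrix (Fin N) (Fin N) ℂ :=
  fun ω => Matrix.of fun i i' => (μ[(fun ω' => F ω' i i') | m]) ω

/-- A sequence (indexed by the number `M` of transmit antennas) of non-centered
non-separable Gaussian MIMO models satisfying assumptions (A.1)–(A.3). -/
structure SeqModel (Ω : Type*) [MeasurableSpace Ω] (μ : Measure Ω) where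
  /-- `ρ > 0` is the fixed noise level (inverse SNR). -/
  ρ : ℝ
  hρ : 0 < ρ
  /-- number of receive antennas as a function of `M` -/
  N : ℕ → ℕ
  hN : Tendsto N atTop atTop
  /-- LoS components -/
  A : ∀ M : ℕ, Matrix (Fin (N M)) (Fin M) ℂ
  /-- variance profiles -/
  S : ∀ M : ℕ, Matrix (Fin (N M)) (Fin M) ℝ
  /-- random matrices -/
  X : ∀ M : ℕ, Ω → Matrix (Fin (N M)) (Fin M) ℂ
  measX : ∀ M i j, Measurable fun ω => X M ω i j
  gaussX : ∀ M : ℕ, 1 ≤ M → IIDcgauss μ (X M) (M : ℝ≥0)⁻¹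
  /-- (A.1) -/
  c₁ : ℝ
  c₂ : ℝ
  hc₁ : 0 < c₁
  hA1 : ∀ᶠ M : ℕ in atTop, c₁ ≤ (M : ℝ) / (N M : ℝ) ∧ (M : ℝ) / (N M : ℝ) ≤ c₂
  /-- (A.2) -/
  σmin : ℝ
  σmax : ℝ
  hσmin : 0 < σmin
  hA2 : ∀ M i j, σmin ≤ S M i j ∧ S M i j ≤ σmax
  /-- (A.3) -/
  amax : ℝ
  hA3 : ∀ M, specNorm (A M) ≤ amax

variable {μ : Measure Ω}

/-- The random channel of the `M`-th model. -/
def SeqModel.H (m : SeqModel Ω μ) (M : ℕ) (ω : Ω) : Matrix (Fin (m.N M)) (Fin M) ℂ :=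
  chan (m.A M) (m.S M) (m.X M ω)

/-- The mutual information of the `M`-th model. -/
def SeqModel.C (m : SeqModel Ω μ) (M : ℕ) (ω : Ω) : ℝ := MI m.ρ (m.H M ω)

/-- The martingale increment `γ_j = E_j[log(1+ζ_j)] − E_{j+1}[log(1+ζ_j)]`. -/
def SeqModel.gamma (m : SeqModel Ω μ) (M : ℕ) (j : Fin M) : Ω → ℝ := fun ω =>
  ((μ[(fun ω' => Real.log (1 + zeta m.ρ (m.A M) (m.S M) (m.H M ω') j)) |
      colSigma (m.X M) (j : ℕ)]) ω) -
  ((μ[(fun ω' => Real.log (1 + zeta m.ρ (m.A M) (m.S M) (m.H M ω') j)) |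
      colSigma (m.X M) ((j : ℕ) + 1)]) ω)



section Statements

variable [IsProbabilityMeasure μ]

lemma aux_sum_split {M : ℕ} (j : Fin M) (f : Fin M → ℂ) :
    ∑ k, f k = (∑ k : {k : Fin M // k ≠ j}, f k.1) + f j := by
  rw [← Finset.sum_erase_add _ _ (Finset.mem_univ j)]
  congr 1
  exact Finset.sum_subtype _ (fun x => by simp) f

lemma aux_trace_mul_vecMulVec {N : ℕ} (B : Matrix (Fin N) (Fin N) ℂ) (w v : Fin N → ℂ) :
    (B * Matrix.vecMulVec w (star v)).trace = star v ⬝ᵥ B *ᵥ w := by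
  simp only [Matrix.trace, Matrix.diag, Matrix.mul_apply, Matrix.vecMulVec_apply,
    dotProduct, Matrix.mulVec, Pi.star_apply]
  refine Finset.sum_congr rfl fun i _ => ?_
  rw [Finset.mul_sum]
  refine Finset.sum_congr rfl fun k _ => ?_
  ring

lemma aux_vecMulVec_mulVec {N : ℕ} (w v x : Fin N → ℂ) :
    Matrix.vecMulVec w (star v) *ᵥ x = (star v ⬝ᵥ x) • w := by
  funext i
  simp only [Matrix.mulVec, Matrix.vecMulVec_apply, dotProduct, Pi.smul_apply,
    Pi.star_apply, smul_eq_mul]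
  rw [Finset.sum_mul]
  refine Finset.sum_congr rfl fun k _ => ?_
  ring

/-- rank-one perturbation bound for resolvents. -/
theorem stmt7_rank_one_perturbation
    {N M : ℕ} (ρ : ℝ) (hρ : 0 < ρ) (H : Matrix (Fin N) (Fin M) ℂ) (j : Fin M)
    (Ψ : Matrix (Fin N) (Fin N) ℂ) :
    ‖(Ψ * (Qmat ρ H - Qjmat ρ H j)).trace‖ ≤ specNorm Ψ / ρ := by
  classical
  set h : Fin N → ℂ := colv H j with hh
  set Hj : Matrix (Fin N) {k : Fin M // k ≠ j} ℂ := delCol H j with hHj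
  set P : Matrix (Fin N) (Fin N) ℂ := Matrix.vecMulVec h (star h) with hP
  set Aj : Matrix (Fin N) (Fin N) ℂ := (ρ : ℂ) • (1 : Matrix (Fin N) (Fin N) ℂ) + Hj * Hjᴴ
    with hAj
  set Am : Matrix (Fin N) (Fin N) ℂ := (ρ : ℂ) • (1 : Matrix (Fin N) (Fin N) ℂ) + H * Hᴴ
    with hAm
  -- rank-one split
  have hsplit : H * Hᴴ = Hj * Hjᴴ + P := by
    ext i i'
    simp only [Matrix.mul_apply, Matrix.conjTranspose_apply, Matrix.add_apply, hP,
      Matrix.vecMulVec_apply, hHj, delCol, Matrix.of_apply, Pi.star_apply, hh, colv]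
    exact aux_sum_split j fun k => H i k * star (H i' k)
  have hA : Am = Aj + P := by rw [hAm, hAj, hsplit, add_assoc]
  -- positive definiteness
  have hρC : (0 : ℂ) < (ρ : ℂ) := by exact_mod_cast Complex.zero_lt_real.2 hρ
  have hdiagPD : Matrix.PosDef ((ρ : ℂ) • (1 : Matrix (Fin N) (Fin N) ℂ)) := by
    rw [Matrix.smul_one_eq_diagonal]
    exact Matrix.PosDef.diagonal fun _ => hρC
  have hAmPD : Am.PosDef := hdiagPD.add_posSemidef (Matrix.posSemidef_self_mul_conjTranspose H)
  have hAjPD : Aj.PosDef := hdiagPD.add_posSemidef (Matrix.posSemidef_self_mul_conjTranspose Hj)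
  set Q : Matrix (Fin N) (Fin N) ℂ := Am⁻¹ with hQdef
  set Qj : Matrix (Fin N) (Fin N) ℂ := Aj⁻¹ with hQjdef
  have hQeq : Qmat ρ H = Q := rfl
  have hQjeq : Qjmat ρ H j = Qj := rfl
  have hdetAm : IsUnit Am.det := isUnit_iff_ne_zero.2 hAmPD.det_pos.ne'
  have hdetAj : IsUnit Aj.det := isUnit_iff_ne_zero.2 hAjPD.det_pos.ne'
  have hAmQ : Am * Q = 1 := Matrix.mul_nonsing_inv _ hdetAm
  have hQAm : Q * Am = 1 := Matrix.nonsing_inv_mul _ hdetAm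
  have hAjQj : Aj * Qj = 1 := Matrix.mul_nonsing_inv _ hdetAj
  have hQjAj : Qj * Aj = 1 := Matrix.nonsing_inv_mul _ hdetAj
  -- resolvent identity
  have hdiff : Q - Qj = -(Qj * P * Q) := by
    calc Q - Qj = Qj * Aj * Q - Qj * (Am * Q) := by rw [hQjAj, hAmQ, one_mul, mul_one]
      _ = Qj * (Aj - Am) * Q := by noncomm_ring
      _ = -(Qj * P * Q) := by rw [hA]; noncomm_ring
  -- Sherman–Morrison
  set q : Fin N → ℂ := Qj *ᵥ h with hq
  set u : ℂ := star h ⬝ᵥ q with hu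
  have hAjq : Aj *ᵥ q = h := by
    rw [hq, Matrix.mulVec_mulVec, hAjQj, Matrix.one_mulVec]
  have hAmq : Am *ᵥ q = (1 + u) • h := by
    rw [hA, Matrix.add_mulVec, hAjq, hP, aux_vecMulVec_mulVec, add_smul, one_smul, hu]
  have hqQ : q = (1 + u) • (Q *ᵥ h) := by
    have := congrArg (fun v => Q *ᵥ v) hAmq
    simpa only [Matrix.mulVec_mulVec, hQAm, Matrix.one_mulVec, Matrix.mulVec_smul] using this
  -- u is a nonnegative real
  have hu0 : 0 ≤ u := (hAjPD.inv.posSemidef).dotProduct_mulVec_nonneg h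
  set t : ℝ := u.re with ht
  have ht0 : 0 ≤ t := (Complex.nonneg_iff.1 hu0).1
  have hureal : u = (t : ℂ) := by
    have him := (Complex.nonneg_iff.1 hu0).2
    exact Complex.ext rfl him.symm
  have h1t : (0 : ℝ) < 1 + t := by linarith
  have h1u : (1 : ℂ) + u = ((1 + t : ℝ) : ℂ) := by rw [hureal]; push_cast; ring
  have h1une : (1 : ℂ) + u ≠ 0 := by rw [h1u]; exact_mod_cast Complex.ofReal_ne_zero.2 h1t.ne'
  have hQh : Q *ᵥ h = ((1 + t : ℝ) : ℂ)⁻¹ • q := by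
    rw [hqQ, smul_smul, ← h1u, inv_mul_cancel₀ h1une, one_smul]
  -- trace computation
  set w : ℂ := star q ⬝ᵥ Ψ *ᵥ q with hw
  have hQherm : Qᴴ = Q := hAmPD.inv.isHermitian
  have htr : (Ψ * (Qmat ρ H - Qjmat ρ H j)).trace = -(((1 + t : ℝ) : ℂ)⁻¹ * w) := by
    rw [hQeq, hQjeq, hdiff]
    have e1 : Ψ * -(Qj * P * Q) = -((Ψ * Qj * P) * Q) := by noncomm_ring
    rw [e1, Matrix.trace_neg, Matrix.trace_mul_comm, show Q * (Ψ * Qj * P) = (Q * Ψ * Qj) * P by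
      noncomm_ring, aux_trace_mul_vecMulVec]
    congr 1
    have e2 : (Q * Ψ * Qj) *ᵥ h = Q *ᵥ (Ψ *ᵥ q) := by
      rw [hq, Matrix.mulVec_mulVec, Matrix.mulVec_mulVec]
    rw [e2, Matrix.dotProduct_mulVec]
    have e3 : star h ᵥ* Q = star (Q *ᵥ h) := by
      rw [Matrix.star_mulVec, hQherm]
    rw [e3, hQh, star_smul, smul_dotProduct]
    have e4 : star (((1 + t : ℝ) : ℂ)⁻¹) = ((1 + t : ℝ) : ℂ)⁻¹ := by
      rw [star_inv₀, Complex.star_def, Complex.conj_ofReal]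
    rw [e4, hw, smul_eq_mul]
  -- Euclidean norm bookkeeping
  set q' : EuclideanSpace ℂ (Fin N) := (WithLp.equiv 2 (Fin N → ℂ)).symm q with hq'
  have hqq : star q ⬝ᵥ q = ((‖q'‖ ^ 2 : ℝ) : ℂ) := by
    have hqi : star q ⬝ᵥ q = inner ℂ q' q' := by
      rw [hq', WithLp.equiv_symm_apply, EuclideanSpace.inner_toLp_toLp, dotProduct_comm]
    rw [hqi, inner_self_eq_norm_sq_to_K]
    norm_cast
  -- operator norm bound on w
  have hwle : ‖w‖ ≤ specNorm Ψ * ‖q'‖ ^ 2 := by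
    set L := LinearMap.toContinuousLinearMap (Matrix.toEuclideanLin Ψ) with hL
    have hwi : w = inner ℂ q' (L q') := by
      have : (L q' : EuclideanSpace ℂ (Fin N)) = Matrix.toEuclideanLin Ψ q' := rfl
      rw [this, hq', WithLp.equiv_symm_apply, Matrix.toEuclideanLin_toLp,
        EuclideanSpace.inner_toLp_toLp, Matrix.toLin'_apply, dotProduct_comm, hw]
    calc ‖w‖ = ‖(inner ℂ q' (L q') : ℂ)‖ := by rw [hwi]
      _ ≤ ‖q'‖ * ‖L q'‖ := norm_inner_le_norm _ _
      _ ≤ ‖q'‖ * (‖L‖ * ‖q'‖) := by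
          exact mul_le_mul_of_nonneg_left (L.le_opNorm q') (norm_nonneg _)
      _ = specNorm Ψ * ‖q'‖ ^ 2 := by rw [specNorm, ← hL]; ring
  -- quadratic form bound : ρ‖q‖² ≤ t
  have hqt : ρ * ‖q'‖ ^ 2 ≤ t := by
    have h2 : star q ⬝ᵥ h = (t : ℂ) := by
      have e : star q ⬝ᵥ h = (starRingEnd ℂ) u := by
        rw [hu, dotProduct, dotProduct, map_sum]
        refine Finset.sum_congr rfl fun i _ => ?_
        simp only [Pi.star_apply, _root_.map_mul, Complex.star_def, Complex.conj_conj]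
        ring
      rw [e, hureal]
      simp [Complex.conj_ofReal]
    have e : (ρ : ℂ) * ((‖q'‖ ^ 2 : ℝ) : ℂ) + star q ⬝ᵥ ((Hj * Hjᴴ) *ᵥ q) = (t : ℂ) := by
      have h1 : star q ⬝ᵥ (Aj *ᵥ q) = (t : ℂ) := by rw [hAjq, h2]
      rw [← h1, hAj, Matrix.add_mulVec, Matrix.smul_mulVec, Matrix.one_mulVec,
        dotProduct_add, dotProduct_smul, smul_eq_mul, hqq]
    have hpsd : 0 ≤ star q ⬝ᵥ ((Hj * Hjᴴ) *ᵥ q) :=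
      (Matrix.posSemidef_self_mul_conjTranspose Hj).dotProduct_mulVec_nonneg q
    have hre := congrArg Complex.re e
    have hsre : 0 ≤ (star q ⬝ᵥ ((Hj * Hjᴴ) *ᵥ q)).re := (Complex.nonneg_iff.1 hpsd).1
    simp only [Complex.add_re, Complex.ofReal_re, ← Complex.ofReal_mul] at hre
    linarith [hre]
  -- final assembly
  have habs : ‖(Ψ * (Qmat ρ H - Qjmat ρ H j)).trace‖
      = (1 + t)⁻¹ * ‖w‖ := by
    rw [htr, norm_neg, norm_mul, ← Complex.ofReal_inv, Complex.norm_real, Real.norm_eq_abs,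
      abs_of_pos (inv_pos.2 h1t)]
  have hSnn : 0 ≤ specNorm Ψ := norm_nonneg _
  have hq2 : ‖q'‖ ^ 2 ≤ t / ρ := by
    rw [le_div_iff₀ hρ]
    linarith [hqt]
  have hfrac : t / (1 + t) ≤ 1 := by
    rw [div_le_one h1t]
    linarith
  calc ‖(Ψ * (Qmat ρ H - Qjmat ρ H j)).trace‖
      = (1 + t)⁻¹ * ‖w‖ := habs
    _ ≤ (1 + t)⁻¹ * (specNorm Ψ * ‖q'‖ ^ 2) :=
        mul_le_mul_of_nonneg_left hwle (inv_nonneg.2 h1t.le)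
    _ ≤ (1 + t)⁻¹ * (specNorm Ψ * (t / ρ)) := by
        refine mul_le_mul_of_nonneg_left (mul_le_mul_of_nonneg_left hq2 hSnn)
          (inv_nonneg.2 h1t.le)
    _ = specNorm Ψ / ρ * (t / (1 + t)) := by ring
    _ ≤ specNorm Ψ / ρ := mul_le_of_le_one_right (div_nonneg hSnn hρ.le) hfrac

end Statements

end HoloMIMO
end
end

section
/- Let T ∈ ℂ^{N×N} be Hermitian positive definite and let D₁, D₂ be N×N diagonal matrices with nonnegative entries. Then Tr(D₁ D₂) ≤ ‖T^{-1}‖² · Tr(D₁ T D₂ T), where ‖·‖ denotes the spectral norm. -/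
noncomputable section

open MeasureTheory ProbabilityTheory Matrix Filter Finset
open scoped ENNReal NNReal Matrix BoundedContinuousFunction Topology ComplexOrder

namespace HoloMIMO

variable {Ω : Type*} [MeasurableSpace Ω]

variable {μ : Measure Ω}

section Statements

variable [IsProbabilityMeasure μ]

open scoped MatrixOrder in
private lemma key {n : ℕ} (T : Matrix (Fin n) (Fin n) ℂ) (hT : T.PosDef) (k : Fin n) :
    1 ≤ specNorm T⁻¹ * (T k k).re := by
  set R := CFC.sqrt T with hRdef
  have hRherm : Rᴴ = R := (CFC.sqrt_nonneg T).posSemidef.1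
  have hRR : R * R = T := CFC.sqrt_mul_sqrt_self T hT.posSemidef.nonneg
  have hdetT : T.det ≠ 0 := hT.det_pos.ne'
  have hdetR : R.det ≠ 0 := by
    intro h
    apply hdetT
    rw [← hRR, det_mul, h, mul_zero]
  -- R * T⁻¹ * R = 1
  have hRTR : R * T⁻¹ * R = 1 := by
    rw [← hRR, Matrix.mul_inv_rev, ← Matrix.mul_assoc,
      Matrix.mul_nonsing_inv _ hdetR.isUnit, Matrix.one_mul,
      Matrix.nonsing_inv_mul _ hdetR.isUnit]
  set u : Fin n → ℂ := Pi.single k 1 with hu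
  set v : Fin n → ℂ := R *ᵥ u with hv
  set y : EuclideanSpace ℂ (Fin n) := (WithLp.equiv 2 (Fin n → ℂ)).symm v with hy
  set L := LinearMap.toContinuousLinearMap (Matrix.toEuclideanLin T⁻¹) with hL
  have hLy : L y = (WithLp.equiv 2 (Fin n → ℂ)).symm (T⁻¹ *ᵥ v) := rfl
  have hinner : inner ℂ y (L y) = (1 : ℂ) := by
    have : inner ℂ y (L y) = star v ⬝ᵥ (T⁻¹ *ᵥ v) := by
      simp [hLy, PiLp.inner_apply, dotProduct, mul_comm]
      rfl
    rw [this, hv, Matrix.star_mulVec, hRherm, Matrix.dotProduct_mulVec,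
      Matrix.vecMul_vecMul, Matrix.dotProduct_mulVec, Matrix.vecMul_vecMul, hRTR,
      Matrix.vecMul_one, hu]
    simp
  have hnormy : ‖y‖ ^ 2 = (T k k).re := by
    have h1 : ‖y‖ ^ 2 = ∑ l, Complex.normSq (v l) := by
      rw [EuclideanSpace.norm_eq, Real.sq_sqrt (by positivity)]
      congr 1; ext l
      rw [← Complex.sq_norm]
      rfl
    rw [h1]
    have h2 : T k k = ∑ l, (Complex.normSq (v l) : ℂ) := by
      rw [← hRR]
      simp only [Matrix.mul_apply]
      congr 1; ext l
      have hvl : v l = R l k := by simp [hv, hu, Matrix.mulVec_single]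
      have hRkl : R k l = star (R l k) := by
        conv_lhs => rw [← hRherm]
        rfl
      rw [hvl, hRkl, Complex.star_def, mul_comm, Complex.mul_conj]
    rw [h2]
    push_cast
    simp
  have hcs : ‖(1 : ℂ)‖ ≤ ‖L‖ * ‖y‖ ^ 2 := by
    calc ‖(1:ℂ)‖ = ‖inner ℂ y (L y)‖ := by rw [hinner]
    _ ≤ ‖y‖ * ‖L y‖ := norm_inner_le_norm y (L y)
    _ ≤ ‖y‖ * (‖L‖ * ‖y‖) := by
        gcongr
        exact L.le_opNorm y
    _ = ‖L‖ * ‖y‖ ^ 2 := by ring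
  rw [norm_one, hnormy] at hcs
  exact hcs

/-- trace inequality `Tr(D₁D₂) ≤ ‖T⁻¹‖² Tr(D₁TD₂T)`. -/
theorem stmt15_trace_inequality
    {n : ℕ} (T : Matrix (Fin n) (Fin n) ℂ) (hT : T.PosDef)
    (d₁ d₂ : Fin n → ℝ) (hd₁ : ∀ k, 0 ≤ d₁ k) (hd₂ : ∀ k, 0 ≤ d₂ k) :
    ((Matrix.diagonal (fun k => (d₁ k : ℂ)) *
        Matrix.diagonal (fun k => (d₂ k : ℂ))).trace).re ≤
      specNorm T⁻¹ ^ 2 *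
        ((Matrix.diagonal (fun k => (d₁ k : ℂ)) * T *
          Matrix.diagonal (fun k => (d₂ k : ℂ)) * T).trace).re := by
  set s := specNorm T⁻¹ with hs
  have hs0 : 0 ≤ s := norm_nonneg _
  have hconj : ∀ k l : Fin n, T l k = (starRingEnd ℂ) (T k l) := by
    intro k l
    conv_lhs => rw [← hT.1]
    rfl
  -- LHS
  have hLHS : ((Matrix.diagonal (fun k => (d₁ k : ℂ)) *
      Matrix.diagonal (fun k => (d₂ k : ℂ))).trace).re = ∑ k, d₁ k * d₂ k := by
    rw [Matrix.diagonal_mul_diagonal, Matrix.trace_diagonal, Complex.re_sum]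
    refine Finset.sum_congr rfl fun k _ => ?_
    simp [← Complex.ofReal_mul]
  -- RHS
  have hRHS : ((Matrix.diagonal (fun k => (d₁ k : ℂ)) * T *
      Matrix.diagonal (fun k => (d₂ k : ℂ)) * T).trace).re =
      ∑ k, ∑ l, d₁ k * d₂ l * Complex.normSq (T k l) := by
    have hM : ∀ k l, (Matrix.diagonal (fun k => (d₁ k : ℂ)) * T *
        Matrix.diagonal (fun k => (d₂ k : ℂ))) k l = (d₁ k : ℂ) * T k l * (d₂ l : ℂ) := by
      intro k l
      rw [Matrix.mul_diagonal, Matrix.diagonal_mul]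
    have : ((Matrix.diagonal (fun k => (d₁ k : ℂ)) * T *
        Matrix.diagonal (fun k => (d₂ k : ℂ)) * T).trace) =
        ∑ k, ∑ l, ((d₁ k * d₂ l * Complex.normSq (T k l) : ℝ) : ℂ) := by
      rw [Matrix.trace]
      refine Finset.sum_congr rfl fun k _ => ?_
      rw [Matrix.diag_apply, Matrix.mul_apply]
      refine Finset.sum_congr rfl fun l _ => ?_
      rw [hM, hconj k l]
      push_cast
      rw [mul_comm ((d₁ k : ℂ) * T k l) (d₂ l : ℂ), mul_assoc, mul_assoc, Complex.mul_conj]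
      push_cast
      ring
    rw [this, Complex.re_sum]
    refine Finset.sum_congr rfl fun k _ => ?_
    rw [Complex.re_sum]
    refine Finset.sum_congr rfl fun l _ => ?_
    simp
  rw [hLHS, hRHS, Finset.mul_sum]
  refine Finset.sum_le_sum fun k _ => ?_
  have hkey : 1 ≤ s * (T k k).re := key T hT k
  have hTkk0 : 0 ≤ (T k k).re := by
    nlinarith
  have hdiag : Complex.normSq (T k k) = (T k k).re ^ 2 := by
    have him : (T k k).im = 0 := by
      have := hconj k k
      have := congrArg Complex.im this
      simp at this
      linarith
    rw [Complex.normSq_apply, him]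
    ring
  have h1 : 1 ≤ s ^ 2 * Complex.normSq (T k k) := by
    have := mul_le_mul hkey hkey zero_le_one (by positivity)
    rw [hdiag]
    nlinarith
  have hstep : d₁ k * d₂ k ≤ s ^ 2 * (d₁ k * d₂ k * Complex.normSq (T k k)) := by
    have hdd : 0 ≤ d₁ k * d₂ k := mul_nonneg (hd₁ k) (hd₂ k)
    nlinarith
  refine hstep.trans ?_
  gcongr
  refine Finset.single_le_sum (f := fun l => d₁ k * d₂ l * Complex.normSq (T k l))
    (fun l _ => mul_nonneg (mul_nonneg (hd₁ k) (hd₂ l)) (Complex.normSq_nonneg _)) (Finset.mem_univ k)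

end Statements

end HoloMIMO
end
end
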